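/- Let R be a discrete valuation ring with maximal ideal (π), field of fractions K, and residue field k = R/(π). Let A be an R-algebra that is free of finite rank as an R-module, and let X, Y be A-modules that are free of finite rank over R. Let M be a K⊗A-submodule of K⊗Y. If Hom_{K⊗A}(K⊗X, (K⊗Y)/M) ≠ 0, then there exists a k⊗A-submodule N of k⊗Y such that Hom_{k⊗A}(k⊗X, (k⊗Y)/N) ≠ 0. -/

import Mathlib

open TensorProduct

noncomputable section

variable (R : Type) [CommRing R]
variable (S : Type) [CommRing S] [Algebra R S]
variable (A : Type) [Ring A] [Algebra R A]
variable (X : Type) [AddCommGroup X] [Module R X] [Module A X] [IsScalarTower R A X]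

/-- The standard `R`-module structure on `S ⊗[R] X` (recorded before any new instances). -/
abbrev stdRMod : Module R (S ⊗[R] X) := inferInstance

/-- The standard scalar tower (recorded before any new instances). -/
abbrev stdRSTower : IsScalarTower R S (S ⊗[R] X) := inferInstance

/-- The action of `a : A` on `S ⊗[R] X`, obtained by base change of the action on `X`. -/
def smulBC (a : A) : S ⊗[R] X →ₗ[S] S ⊗[R] X :=
  LinearMap.baseChange S
    { toFun := fun x => a • x
      map_add' := fun x y => smul_add a x y
      map_smul' := fun r x => smul_comm a r x }

@[simp] lemma smulBC_tmul (a : A) (s : S) (x : X) :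
    smulBC R S A X a (s ⊗ₜ[R] x) = s ⊗ₜ[R] (a • x) := rfl

/-- `S ⊗[R] X` is an `A`-module. -/
instance extModule : Module A (S ⊗[R] X) where
  smul a z := smulBC R S A X a z
  one_smul z := by
    show smulBC R S A X 1 z = z
    induction z using TensorProduct.induction_on with
    | zero => simp
    | tmul s x => simp
    | add u v hu hv => rw [map_add, hu, hv]
  mul_smul a b z := by
    show smulBC R S A X (a * b) z = smulBC R S A X a (smulBC R S A X b z)
    induction z using TensorProduct.induction_on with
    | zero => simp
    | tmul s x => simp [mul_smul]
    | add u v hu hv => rw [map_add, hu, hv, map_add, map_add]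
  smul_zero a := map_zero _
  smul_add a u v := map_add _ u v
  add_smul a b z := by
    show smulBC R S A X (a + b) z = smulBC R S A X a z + smulBC R S A X b z
    induction z using TensorProduct.induction_on with
    | zero => simp
    | tmul s x => simp [add_smul, TensorProduct.tmul_add]
    | add u v hu hv =>
        rw [map_add, hu, hv, map_add, map_add]
        abel
  zero_smul z := by
    show smulBC R S A X 0 z = 0
    induction z using TensorProduct.induction_on with
    | zero => simp
    | tmul s x => simp
    | add u v hu hv => rw [map_add, hu, hv, add_zero]

lemma extModule_smul_def (a : A) (z : S ⊗[R] X) : a • z = smulBC R S A X a z := rfl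

instance extSMulComm : SMulCommClass S A (S ⊗[R] X) :=
  ⟨fun s a z => (map_smul (smulBC R S A X a) s z).symm⟩

instance extTower : IsScalarTower R A (S ⊗[R] X) := by
  constructor
  intro r a z
  rw [extModule_smul_def, extModule_smul_def]
  induction z using TensorProduct.induction_on with
  | zero => exact (smul_zero r).symm
  | tmul s x => simp [smul_assoc, TensorProduct.tmul_smul]
  | add u v hu hv => rw [map_add, hu, hv, map_add, smul_add]

/-- `S ⊗[R] X` is a module over the base-changed algebra `S ⊗[R] A`. -/
instance extAlgModule : Module (S ⊗[R] A) (S ⊗[R] X) :=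
  @TensorProduct.Algebra.module R S A (S ⊗[R] X) _ _ (stdRMod R S X) _ _ _
    (extModule R S A X) _ _ (stdRSTower R S X) (extTower R S A X) (extSMulComm R S A X)

end

attribute [-instance] extModule extTower

noncomputable section Aux

open TensorProduct

variable (R : Type) [CommRing R]
variable (S : Type) [CommRing S] [Algebra R S]
variable (A : Type) [Ring A] [Algebra R A]
variable (X : Type) [AddCommGroup X] [Module R X] [Module A X] [IsScalarTower R A X]

lemma ext_smul_def (s : S) (a : A) (m : S ⊗[R] X) :
    (s ⊗ₜ[R] a) • m = s • (smulBC R S A X a m) := rfl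

lemma smulBC_one (m : S ⊗[R] X) : smulBC R S A X 1 m = m := by
  induction m using TensorProduct.induction_on with
  | zero => simp
  | tmul s x => simp
  | add u v hu hv => rw [map_add, hu, hv]

lemma ext_tmul_one_smul (s : S) (m : S ⊗[R] X) : (s ⊗ₜ[R] (1 : A)) • m = s • m := by
  rw [ext_smul_def, smulBC_one]

lemma ext_one_tmul_smul (a : A) (m : S ⊗[R] X) :
    ((1 : S) ⊗ₜ[R] a) • m = smulBC R S A X a m := by
  rw [ext_smul_def, one_smul]

/-- the action of `a` as an `R`-linear endomorphism -/
def actM (a : A) : X →ₗ[R] X :=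
  { toFun := fun x => a • x
    map_add' := fun x y => smul_add a x y
    map_smul' := fun r x => smul_comm a r x }

lemma smulBC_eq_baseChange (a : A) :
    smulBC R S A X a = LinearMap.baseChange S (actM R A X a) := rfl

end Aux

set_option maxHeartbeats 1000000 in
open TensorProduct in
theorem modular_reduction_of_hom
    (R : Type) [CommRing R] [IsDomain R] [IsDiscreteValuationRing R]
    (K : Type) [Field K] [Algebra R K] [IsFractionRing R K]
    (k : Type) [Field k] [Algebra R k]
    (hsurj : Function.Surjective (algebraMap R k))
    (hker : RingHom.ker (algebraMap R k) = IsLocalRing.maximalIdeal R)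
    (A : Type) [Ring A] [Algebra R A] [Module.Free R A] [Module.Finite R A]
    (X : Type) [AddCommGroup X] [Module R X] [Module A X] [IsScalarTower R A X]
    [Module.Free R X] [Module.Finite R X]
    (Y : Type) [AddCommGroup Y] [Module R Y] [Module A Y] [IsScalarTower R A Y]
    [Module.Free R Y] [Module.Finite R Y]
    (M : Submodule (K ⊗[R] A) (K ⊗[R] Y))
    (hHom : ∃ f : (K ⊗[R] X) →ₗ[K ⊗[R] A] ((K ⊗[R] Y) ⧸ M), f ≠ 0) :
    ∃ N : Submodule (k ⊗[R] A) (k ⊗[R] Y),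
      (∃ g : (k ⊗[R] X) →ₗ[k ⊗[R] A] ((k ⊗[R] Y) ⧸ N), g ≠ 0) ∧
      -- moreover, `N` is the `p`-modular reduction of a lattice in `M`
      ∃ L : Submodule R Y,
        (M : Set (K ⊗[R] Y)) =
          (Submodule.span K (⇑(TensorProduct.mk R K Y 1) '' (L : Set Y)) : Set (K ⊗[R] Y)) ∧
        (N : Set (k ⊗[R] Y)) =
          (Submodule.span k (⇑(TensorProduct.mk R k Y 1) '' (L : Set Y)) : Set (k ⊗[R] Y)) := by
  classical
  obtain ⟨f, hf⟩ := hHom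
  set ρK : Y →ₗ[R] K ⊗[R] Y := TensorProduct.mk R K Y 1 with hρKdef
  set ρ : Y →ₗ[R] k ⊗[R] Y := TensorProduct.mk R k Y 1 with hρdef
  have hρKapp : ∀ y : Y, ρK y = (1 : K) ⊗ₜ[R] y := fun _ => rfl
  have hρapp : ∀ y : Y, ρ y = (1 : k) ⊗ₜ[R] y := fun _ => rfl
  have injK : Function.Injective (algebraMap R K) := IsFractionRing.injective R K
  have hMsmulK : ∀ (c : K) {z : K ⊗[R] Y}, z ∈ M → c • z ∈ M := by
    intro c z hz
    rw [← ext_tmul_one_smul R K A Y c z]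
    exact M.smul_mem _ hz
  have hMsmulA : ∀ (a : A) {z : K ⊗[R] Y}, z ∈ M → smulBC R K A Y a z ∈ M := by
    intro a z hz
    rw [← ext_one_tmul_smul R K A Y a z]
    exact M.smul_mem _ hz
  have hRsmul : ∀ (r : R) (z : K ⊗[R] Y), r • z = (algebraMap R K r) • z := fun r z =>
    (algebraMap_smul K r z).symm
  have hRsmulX : ∀ (r : R) (z : K ⊗[R] X), r • z = (algebraMap R K r) • z := fun r z =>
    (algebraMap_smul K r z).symm
  have hρs : ∀ (r : R) (v : k ⊗[R] Y), algebraMap R k r • v = r • v := fun r v =>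
    algebraMap_smul k r v
  -- the lattice L
  let L : Submodule R Y :=
    { carrier := {y | ρK y ∈ M}
      add_mem' := fun {a b} ha hb => by
        show ρK (a + b) ∈ M
        rw [map_add]; exact M.add_mem ha hb
      zero_mem' := by show ρK 0 ∈ M; rw [map_zero]; exact M.zero_mem
      smul_mem' := fun r y hy => by
        show ρK (r • y) ∈ M
        rw [map_smul, hRsmul]
        exact hMsmulK _ hy }
  have hLmem : ∀ {y : Y}, y ∈ L ↔ ρK y ∈ M := fun {y} => Iff.rfl
  have hLA : ∀ (a : A) {y : Y}, y ∈ L → a • y ∈ L := by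
    intro a y hy
    have h1 : ρK (a • y) = smulBC R K A Y a (ρK y) := by
      rw [hρKapp, hρKapp, smulBC_tmul]
    rw [hLmem] at hy ⊢
    rw [h1]
    exact hMsmulA a hy
  have hLsat : ∀ (r : R) (y : Y), r ≠ 0 → r • y ∈ L → y ∈ L := by
    intro r y hr hy
    rw [hLmem] at hy ⊢
    rw [map_smul, hRsmul] at hy
    have halg : algebraMap R K r ≠ 0 := by
      simpa using injK.ne hr
    have h2 := hMsmulK ((algebraMap R K r)⁻¹) hy
    rwa [smul_smul, inv_mul_cancel₀ halg, one_smul] at h2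
  -- bases
  let ι := Module.Free.ChooseBasisIndex R X
  let bX : Module.Basis ι R X := Module.Free.chooseBasis R X
  let κ := Module.Free.ChooseBasisIndex R Y
  let bY : Module.Basis κ R Y := Module.Free.chooseBasis R Y
  set bYK : Module.Basis κ K (K ⊗[R] Y) := Algebra.TensorProduct.basis K bY with hbYK
  -- clearing denominators in K ⊗ Y
  have hdenom : ∀ z : K ⊗[R] Y, ∃ (r : R) (y : Y), r ≠ 0 ∧ (algebraMap R K r) • z = ρK y := by
    intro z
    obtain ⟨b, hb⟩ := IsLocalization.exist_integer_multiples_of_finite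
      (nonZeroDivisors R) (fun j : κ => bYK.repr z j)
    choose t ht using fun j => RingHom.mem_range.mp (hb j)
    refine ⟨b, ∑ j, t j • bY j, nonZeroDivisors.ne_zero b.2, ?_⟩
    have h1 : ρK (∑ j, t j • bY j) = ∑ j, algebraMap R K (t j) • bYK j := by
      rw [map_sum]
      refine Finset.sum_congr rfl fun j _ => ?_
      rw [map_smul, hRsmul]
      congr 1
      rw [hρKapp, hbYK, Algebra.TensorProduct.basis_apply]
    rw [h1]
    conv_lhs => rw [← bYK.sum_repr z]
    rw [Finset.smul_sum]
    refine Finset.sum_congr rfl fun j _ => ?_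
    rw [smul_smul, ht j, Algebra.smul_def]
  -- Step B : M as a set equals span K (ρK '' L)
  have hMset : (M : Set (K ⊗[R] Y)) =
      (Submodule.span K (ρK '' (L : Set Y)) : Set (K ⊗[R] Y)) := by
    apply Set.Subset.antisymm
    · intro z hz
      obtain ⟨r, y, hr, hry⟩ := hdenom z
      have hyL : y ∈ L := by rw [hLmem, ← hry]; exact hMsmulK _ hz
      have halg : algebraMap R K r ≠ 0 := by simpa using injK.ne hr
      have hz' : z = (algebraMap R K r)⁻¹ • ρK y := by
        rw [← hry, smul_smul, inv_mul_cancel₀ halg, one_smul]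
      rw [SetLike.mem_coe, hz']
      exact Submodule.smul_mem _ _ (Submodule.subset_span ⟨y, hyL, rfl⟩)
    · intro z hz
      rw [SetLike.mem_coe] at hz ⊢
      refine Submodule.span_induction ?_ ?_ ?_ ?_ hz
      · rintro _ ⟨y, hy, rfl⟩; exact hy
      · exact M.zero_mem
      · intro u v _ _ hu hv; exact M.add_mem hu hv
      · intro c u _ hu; exact hMsmulK c hu
  -- Step C : the submodule N with carrier ρ '' L
  let N : Submodule (k ⊗[R] A) (k ⊗[R] Y) :=
    { carrier := ρ '' (L : Set Y)
      add_mem' := by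
        rintro _ _ ⟨u, hu, rfl⟩ ⟨v, hv, rfl⟩
        exact ⟨u + v, L.add_mem hu hv, map_add ρ u v⟩
      zero_mem' := ⟨0, L.zero_mem, map_zero ρ⟩
      smul_mem' := by
        intro c v hv
        induction c using TensorProduct.induction_on with
        | zero =>
            rw [zero_smul]
            exact ⟨0, L.zero_mem, map_zero ρ⟩
        | tmul u a =>
            obtain ⟨y, hy, rfl⟩ := hv
            obtain ⟨r, rfl⟩ := hsurj u
            refine ⟨r • (a • y), L.smul_mem r (hLA a hy), ?_⟩
            have hsm : smulBC R k A Y a (ρ y) = ρ (a • y) := by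
              rw [hρapp, hρapp]
              exact smulBC_tmul R k A Y a 1 y
            rw [ext_smul_def R k A Y, hsm, hρs, ← map_smul]
        | add c₁ c₂ h₁ h₂ =>
            rw [add_smul]
            obtain ⟨u, hu, he⟩ := h₁
            obtain ⟨w, hw, he'⟩ := h₂
            exact ⟨u + w, L.add_mem hu hw, by rw [map_add, he, he']⟩ }
  have hNmem : ∀ {v : k ⊗[R] Y}, v ∈ N ↔ v ∈ ρ '' (L : Set Y) := fun {v} => Iff.rfl
  have hNset : (N : Set (k ⊗[R] Y)) =
      (Submodule.span k (ρ '' (L : Set Y)) : Set (k ⊗[R] Y)) := by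
    apply Set.Subset.antisymm
    · exact fun v hv => Submodule.subset_span hv
    · intro v hv
      rw [SetLike.mem_coe] at hv ⊢
      refine Submodule.span_induction ?_ ?_ ?_ ?_ hv
      · exact fun x hx => hx
      · exact N.zero_mem
      · intro u w _ _ hu hw; exact N.add_mem hu hw
      · intro c u _ hu
        obtain ⟨r, rfl⟩ := hsurj c
        obtain ⟨y, hy, rfl⟩ := hNmem.mp hu
        exact hNmem.mpr ⟨r • y, L.smul_mem r hy, by rw [map_smul, hρs]⟩
  -- the quotient Y ⧸ L is finite free
  haveI : NoZeroSMulDivisors R (Y ⧸ L) := by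
    refine ⟨fun {r v} hrv => ?_⟩
    obtain ⟨y, rfl⟩ := L.mkQ_surjective v
    by_cases hr : r = 0
    · exact Or.inl hr
    · right
      rw [← map_smul, Submodule.mkQ_apply, Submodule.Quotient.mk_eq_zero] at hrv
      rw [Submodule.mkQ_apply, Submodule.Quotient.mk_eq_zero]
      exact hLsat r y hr hrv
  haveI : Module.Free R (Y ⧸ L) := Module.free_of_finite_type_torsion_free'
  let μ := Module.Free.ChooseBasisIndex R (Y ⧸ L)
  let d : Module.Basis μ R (Y ⧸ L) := Module.Free.chooseBasis R (Y ⧸ L)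
  set q : Y →ₗ[R] Y ⧸ L := L.mkQ with hqdef
  let s : (Y ⧸ L) →ₗ[R] Y := Module.Basis.constr d R fun j => Function.surjInv L.mkQ_surjective (d j)
  have hqs : q ∘ₗ s = LinearMap.id := by
    refine Module.Basis.ext d fun j => ?_
    rw [LinearMap.comp_apply]
    rw [show s (d j) = Function.surjInv L.mkQ_surjective (d j) from Module.Basis.constr_basis d R _ j]
    rw [hqdef, LinearMap.id_apply]
    exact Function.surjInv_eq L.mkQ_surjective (d j)
  have hqs' : ∀ v, q (s v) = v := fun v => by
    have h1 := DFunLike.congr_fun hqs v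
    simpa using h1
  have hqmem : ∀ y : Y, y ∈ L ↔ q y = 0 := fun y => by
    rw [hqdef, Submodule.mkQ_apply, Submodule.Quotient.mk_eq_zero]
  -- A acts on Y ⧸ L
  have hLA' : ∀ a : A, L ≤ L.comap (actM R A Y a) := fun a y hy => hLA a hy
  let qa : A → (Y ⧸ L) →ₗ[R] (Y ⧸ L) := fun a => Submodule.mapQ L L (actM R A Y a) (hLA' a)
  have hqa : ∀ (a : A) (y : Y), qa a (q y) = q (a • y) := fun a y => by
    show Submodule.mapQ L L (actM R A Y a) (hLA' a) (L.mkQ y) = L.mkQ (actM R A Y a y)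
    rw [Submodule.mkQ_apply, Submodule.mkQ_apply, Submodule.mapQ_apply]
  -- base change of q and its kernel
  set Kq : K ⊗[R] Y →ₗ[K] K ⊗[R] (Y ⧸ L) := LinearMap.baseChange K q with hKqdef
  have hKqL : ∀ y ∈ L, Kq (ρK y) = 0 := by
    intro y hy
    rw [hρKapp, hKqdef, LinearMap.baseChange_tmul, (hqmem y).mp hy, tmul_zero]
  have hKq0 : ∀ v ∈ M, Kq v = 0 := by
    intro v hv
    have hv' : v ∈ Submodule.span K (ρK '' (L : Set Y)) := by
      rw [← SetLike.mem_coe, ← hMset]; exact hv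
    refine Submodule.span_induction ?_ ?_ ?_ ?_ hv'
    · rintro _ ⟨y, hy, rfl⟩; exact hKqL y hy
    · exact map_zero _
    · intro u w _ _ hu hw; rw [map_add, hu, hw, add_zero]
    · intro c u _ hu; rw [map_smul, hu, smul_zero]
  have hsub : ∀ v : K ⊗[R] Y, v - LinearMap.baseChange K (s ∘ₗ q) v ∈ M := by
    intro v
    induction v using TensorProduct.induction_on with
    | zero => simpa using M.zero_mem
    | tmul c y =>
        rw [LinearMap.baseChange_tmul, LinearMap.comp_apply, ← TensorProduct.tmul_sub]
        have hyL : y - s (q y) ∈ L := by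
          rw [hqmem, map_sub, hqs', sub_self]
        have h2 : (c : K) ⊗ₜ[R] (y - s (q y)) = c • ρK (y - s (q y)) := by
          rw [hρKapp, smul_tmul', smul_eq_mul, mul_one]
        rw [h2]
        exact hMsmulK c (hLmem.mp hyL)
    | add u w hu hw =>
        rw [map_add]
        have h3 : (u - LinearMap.baseChange K (s ∘ₗ q) u)
            + (w - LinearMap.baseChange K (s ∘ₗ q) w)
            = u + w - (LinearMap.baseChange K (s ∘ₗ q) u
              + LinearMap.baseChange K (s ∘ₗ q) w) := by abel
        rw [← h3]
        exact M.add_mem hu hw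
  have hKqker : ∀ v : K ⊗[R] Y, Kq v = 0 → v ∈ M := by
    intro v hv
    have h1 : LinearMap.baseChange K (s ∘ₗ q) v = 0 := by
      rw [LinearMap.baseChange_comp, LinearMap.comp_apply, ← hKqdef, hv, map_zero]
    have h2 := hsub v
    rwa [h1, sub_zero] at h2
  -- the lift F of f on the lattice X
  let F : X →ₗ[R] K ⊗[R] Y :=
    Module.Basis.constr bX R fun i => Function.surjInv M.mkQ_surjective (f ((1 : K) ⊗ₜ[R] bX i))
  have hF : ∀ x : X, M.mkQ (F x) = f ((1 : K) ⊗ₜ[R] x) := by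
    intro x
    have hx : x ∈ Submodule.span R (Set.range bX) := by rw [bX.span_eq]; trivial
    refine Submodule.span_induction ?_ ?_ ?_ ?_ hx
    · rintro _ ⟨i, rfl⟩
      rw [show F (bX i) = Function.surjInv M.mkQ_surjective (f ((1 : K) ⊗ₜ[R] bX i)) from
        Module.Basis.constr_basis bX R _ i]
      exact Function.surjInv_eq M.mkQ_surjective _
    · rw [map_zero, map_zero, TensorProduct.tmul_zero, map_zero]
    · intro u v _ _ hu hv
      rw [map_add, map_add, TensorProduct.tmul_add, map_add, hu, hv]
    · intro r x _ hx
      have h1 : F (r • x) = (algebraMap R K r ⊗ₜ[R] (1 : A)) • F x := by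
        rw [map_smul, hRsmul, ext_tmul_one_smul]
      rw [h1, map_smul, hx, ← map_smul, ext_tmul_one_smul, ← hRsmulX, ← TensorProduct.tmul_smul]
  have hFA : ∀ (a : A) (x : X), F (a • x) - smulBC R K A Y a (F x) ∈ M := by
    intro a x
    have h1 : M.mkQ (smulBC R K A Y a (F x)) = f ((1 : K) ⊗ₜ[R] (a • x)) := by
      rw [← ext_one_tmul_smul R K A Y, map_smul, hF, ← map_smul, ext_one_tmul_smul,
        smulBC_tmul]
    have h2 : M.mkQ (F (a • x)) = M.mkQ (smulBC R K A Y a (F x)) := by rw [hF, h1]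
    rw [Submodule.mkQ_apply, Submodule.mkQ_apply] at h2
    exact (Submodule.Quotient.eq M).mp h2
  -- the coordinate map W
  set W : X →ₗ[R] K ⊗[R] (Y ⧸ L) := (Kq.restrictScalars R) ∘ₗ F with hWdef
  have hWapp : ∀ x : X, W x = Kq (F x) := fun _ => rfl
  have hWa : ∀ (a : A) (x : X), W (a • x) = LinearMap.baseChange K (qa a) (W x) := by
    intro a x
    have h0 : Kq (F (a • x)) = Kq (smulBC R K A Y a (F x)) := by
      have h1 := hKq0 _ (hFA a x)
      rw [map_sub] at h1
      exact sub_eq_zero.mp h1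
    have ha : ∀ v : K ⊗[R] Y, smulBC R K A Y a v = LinearMap.baseChange K (actM R A Y a) v :=
      fun v => by rw [smulBC_eq_baseChange]
    have e1 : Kq ∘ₗ LinearMap.baseChange K (actM R A Y a)
        = LinearMap.baseChange K (qa a) ∘ₗ Kq := by
      rw [hKqdef, hqdef, ← LinearMap.baseChange_comp, ← LinearMap.baseChange_comp,
        Submodule.mapQ_mkQ]
    rw [hWapp, hWapp, h0, ha]
    exact DFunLike.congr_fun e1 (F x)
  -- f is nonzero on the image of the lattice X
  have hfx : ∃ x : X, f ((1 : K) ⊗ₜ[R] x) ≠ 0 := by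
    by_contra h
    push_neg at h
    apply hf
    apply LinearMap.ext
    intro z
    rw [LinearMap.zero_apply]
    induction z using TensorProduct.induction_on with
    | zero => rw [map_zero]
    | tmul c x =>
        have h2 : (c ⊗ₜ[R] x : K ⊗[R] X) = (c ⊗ₜ[R] (1 : A)) • ((1 : K) ⊗ₜ[R] x) := by
          rw [ext_tmul_one_smul, smul_tmul', smul_eq_mul, mul_one]
        rw [h2, map_smul, h, smul_zero]
    | add u v hu hv => rw [map_add, hu, hv, add_zero]
  have hWi : ∃ i : ι, W (bX i) ≠ 0 := by
    by_contra h
    push_neg at h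
    obtain ⟨x, hx⟩ := hfx
    have hW0 : W = 0 := Module.Basis.ext bX fun i => by rw [h, LinearMap.zero_apply]
    have h1 : Kq (F x) = 0 := by rw [← hWapp, hW0, LinearMap.zero_apply]
    have h2 : F x ∈ M := hKqker _ h1
    apply hx
    rw [← hF x, Submodule.mkQ_apply, Submodule.Quotient.mk_eq_zero]
    exact h2
  -- coordinates and scaling
  set dK : Module.Basis μ K (K ⊗[R] (Y ⧸ L)) := Algebra.TensorProduct.basis K d with hdK
  obtain ⟨b, hb⟩ := IsLocalization.exist_integer_multiples_of_finite (nonZeroDivisors R)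
    (fun p : ι × μ => dK.repr (W (bX p.1)) p.2)
  choose t0 ht0 using fun p => RingHom.mem_range.mp (hb p)
  let t : ι → μ → R := fun i j => t0 (i, j)
  have ht : ∀ i j, algebraMap R K (t i j) = (b : R) • dK.repr (W (bX i)) j :=
    fun i j => ht0 (i, j)
  have halgb : algebraMap R K (b : R) ≠ 0 := by
    simpa using injK.ne (nonZeroDivisors.ne_zero b.2)
  have htne : ∃ i j, t i j ≠ 0 := by
    obtain ⟨i, hi⟩ := hWi
    have h1 : dK.repr (W (bX i)) ≠ 0 := fun h0 => hi (by
      have h2 := congrArg dK.repr.symm h0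
      simpa using h2)
    obtain ⟨j, hj⟩ := Finsupp.ne_iff.mp h1
    refine ⟨i, j, fun h0 => hj ?_⟩
    have h2 := ht i j
    rw [h0, map_zero] at h2
    have h3 : algebraMap R K (b : R) * dK.repr (W (bX i)) j = 0 := by
      rw [← Algebra.smul_def]; exact h2.symm
    rcases mul_eq_zero.mp h3 with h4 | h4
    · exact absurd h4 halgb
    · exact h4
  obtain ⟨ϖ, hϖ⟩ := IsDiscreteValuationRing.exists_irreducible R
  have hϖ0 : ϖ ≠ 0 := hϖ.ne_zero
  have hmax : IsLocalRing.maximalIdeal R = Ideal.span {ϖ} := hϖ.maximalIdeal_eq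
  have hPnot : ∃ m : ℕ, ¬ (∀ i j, t i j ∈ IsLocalRing.maximalIdeal R ^ m) := by
    by_contra h
    push_neg at h
    obtain ⟨i0, j0, hp0⟩ := htne
    apply hp0
    have h1 : t i0 j0 ∈ ⨅ m : ℕ, IsLocalRing.maximalIdeal R ^ m :=
      (Submodule.mem_iInf _).mpr fun m => h m i0 j0
    rwa [Ideal.iInf_pow_eq_bot_of_isLocalRing _
      (Ideal.IsMaximal.ne_top (IsLocalRing.maximalIdeal.isMaximal R)), Ideal.mem_bot] at h1
  have hP0 : ∀ i j, t i j ∈ IsLocalRing.maximalIdeal R ^ 0 := by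
    intro i j; rw [pow_zero, Ideal.one_eq_top]; trivial
  have hn'pos : 0 < Nat.find hPnot := by
    rcases Nat.eq_zero_or_pos (Nat.find hPnot) with h | h
    · exact absurd hP0 (h ▸ Nat.find_spec hPnot)
    · exact h
  set n := Nat.find hPnot - 1 with hndef
  have hPn : ∀ i j, t i j ∈ IsLocalRing.maximalIdeal R ^ n := by
    have h1 := Nat.find_min hPnot (show n < Nat.find hPnot by omega)
    exact not_not.mp h1
  have hPn1 : ¬ ∀ i j, t i j ∈ IsLocalRing.maximalIdeal R ^ (n + 1) := by
    have h1 : n + 1 = Nat.find hPnot := by omega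
    rw [h1]
    exact Nat.find_spec hPnot
  push_neg at hPn1
  obtain ⟨i₁, j₁, hps⟩ := hPn1
  have hdiv : ∀ i j, ∃ u : R, t i j = ϖ ^ n * u := by
    intro i j
    have h1 := hPn i j
    rw [hmax, Ideal.span_singleton_pow, Ideal.mem_span_singleton] at h1
    obtain ⟨u, hu⟩ := h1
    exact ⟨u, hu⟩
  choose t' ht' using hdiv
  have hpsm : t' i₁ j₁ ∉ IsLocalRing.maximalIdeal R := by
    intro hmem
    apply hps
    rw [hmax, Ideal.mem_span_singleton] at hmem
    obtain ⟨u, hu⟩ := hmem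
    rw [hmax, Ideal.span_singleton_pow, Ideal.mem_span_singleton]
    exact ⟨u, by rw [ht' i₁ j₁, hu, pow_succ, mul_assoc]⟩
  have hϖn : algebraMap R K (ϖ ^ n) ≠ 0 := by
    simpa using injK.ne (pow_ne_zero n hϖ0)
  set e : K := algebraMap R K (b : R) * (algebraMap R K (ϖ ^ n))⁻¹ with hedef
  have hec : ∀ i j, e * dK.repr (W (bX i)) j = algebraMap R K (t' i j) := by
    intro i j
    have h1 : algebraMap R K (b : R) * dK.repr (W (bX i)) j
        = algebraMap R K (ϖ ^ n) * algebraMap R K (t' i j) := by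
      rw [← map_mul, ← ht' i j, ht i j, Algebra.smul_def]
    calc e * dK.repr (W (bX i)) j
        = (algebraMap R K (ϖ ^ n))⁻¹ * (algebraMap R K (b : R) * dK.repr (W (bX i)) j) := by
          rw [hedef]; ring
      _ = (algebraMap R K (ϖ ^ n))⁻¹
            * (algebraMap R K (ϖ ^ n) * algebraMap R K (t' i j)) := by rw [h1]
      _ = algebraMap R K (t' i j) := by rw [← mul_assoc, inv_mul_cancel₀ hϖn, one_mul]
  -- the reduced lattice map g₂
  let g₂ : X →ₗ[R] (Y ⧸ L) := Module.Basis.constr bX R fun i => ∑ j, t' i j • d j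
  set ρL : (Y ⧸ L) →ₗ[R] K ⊗[R] (Y ⧸ L) := TensorProduct.mk R K (Y ⧸ L) 1 with hρLdef
  have hρLapp : ∀ v, ρL v = (1 : K) ⊗ₜ[R] v := fun _ => rfl
  have hg₂ : ∀ x : X, ρL (g₂ x) = e • W x := by
    have hmaps : ρL ∘ₗ g₂ = e • W := by
      refine Module.Basis.ext bX fun i => ?_
      rw [LinearMap.comp_apply, LinearMap.smul_apply,
        show g₂ (bX i) = ∑ j, t' i j • d j from Module.Basis.constr_basis bX R _ i]
      rw [map_sum]
      have hW : W (bX i) = ∑ j, dK.repr (W (bX i)) j • dK j := by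
        conv_lhs => rw [← dK.sum_repr (W (bX i))]
      rw [hW, Finset.smul_sum]
      refine Finset.sum_congr rfl fun j _ => ?_
      rw [map_smul, smul_smul, hec i j, hρLapp, hdK, Algebra.TensorProduct.basis_apply,
        algebraMap_smul]
    intro x
    have h1 := DFunLike.congr_fun hmaps x
    simpa using h1
  have hinjρL : Function.Injective ρL := by
    have h0 : ∀ w : Y ⧸ L, ρL w = 0 → w = 0 := by
      intro w hw
      rw [hρLapp] at hw
      have h1 : dK.repr ((1 : K) ⊗ₜ[R] w)
          = Finsupp.mapRange (algebraMap R K) (map_zero _) (d.repr w) := by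
        rw [hdK, Algebra.TensorProduct.basis_repr_tmul, one_smul]
      have h2 : Finsupp.mapRange (algebraMap R K) (map_zero _) (d.repr w) = 0 := by
        rw [← h1, hw, map_zero]
      have h3 : d.repr w = 0 := by
        ext j
        have h4 := DFunLike.congr_fun h2 j
        rw [Finsupp.mapRange_apply] at h4
        simpa using injK (by simpa using h4)
      exact (LinearEquiv.map_eq_zero_iff d.repr).mp h3
    intro u v huv
    have h1 : ρL (u - v) = 0 := by rw [map_sub, huv, sub_self]
    exact sub_eq_zero.mp (h0 _ h1)
  have hg₂a : ∀ (a : A) (x : X), g₂ (a • x) = qa a (g₂ x) := by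
    intro a x
    apply hinjρL
    rw [hg₂, hWa, ← map_smul, ← hg₂, hρLapp, hρLapp, LinearMap.baseChange_tmul]
  -- the map g₁ into k ⊗ Y
  let g₁ : X →ₗ[R] k ⊗[R] Y := ρ ∘ₗ s ∘ₗ g₂
  have hg₁app : ∀ x : X, g₁ x = ρ (s (g₂ x)) := fun _ => rfl
  have hg₁a : ∀ (a : A) (x : X), g₁ (a • x) - smulBC R k A Y a (g₁ x) ∈ N := by
    intro a x
    have h1 : g₁ (a • x) = ρ (s (qa a (g₂ x))) := by rw [hg₁app, hg₂a]
    have h2 : smulBC R k A Y a (g₁ x) = ρ (a • s (g₂ x)) := by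
      rw [hg₁app, hρapp, hρapp, smulBC_tmul]
    rw [h1, h2, ← map_sub]
    have h3 : s (qa a (g₂ x)) - a • s (g₂ x) ∈ L := by
      rw [hqmem, map_sub, hqs', ← hqa, hqs', sub_self]
    exact hNmem.mpr ⟨_, h3, rfl⟩
  -- the kernel of ρ
  have hρker : ∀ v : Y, ρ v = 0 →
      v ∈ (IsLocalRing.maximalIdeal R) • (⊤ : Submodule R Y) := by
    intro v hv
    have h1 : (Algebra.TensorProduct.basis k bY).repr ((1 : k) ⊗ₜ[R] v)
        = Finsupp.mapRange (algebraMap R k) (map_zero _) (bY.repr v) := by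
      rw [Algebra.TensorProduct.basis_repr_tmul, one_smul]
    rw [hρapp] at hv
    have h2 : ∀ j, algebraMap R k (bY.repr v j) = 0 := by
      intro j
      have h3 : Finsupp.mapRange (algebraMap R k) (map_zero _) (bY.repr v) = 0 := by
        rw [← h1, hv, map_zero]
      have h4 := DFunLike.congr_fun h3 j
      rwa [Finsupp.mapRange_apply] at h4
    have h5 : ∀ j, bY.repr v j ∈ IsLocalRing.maximalIdeal R := by
      intro j
      rw [← hker]
      exact h2 j
    have h6 : v = ∑ j, bY.repr v j • bY j := (bY.sum_repr v).symm
    rw [h6]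
    exact Submodule.sum_mem _ fun j _ => Submodule.smul_mem_smul (h5 j) trivial
  have hcoord : ∀ w ∈ (IsLocalRing.maximalIdeal R) • (⊤ : Submodule R (Y ⧸ L)),
      ∀ j : μ, d.repr w j ∈ IsLocalRing.maximalIdeal R := by
    intro w hw j
    have h1 : d.repr w j ∈ Submodule.map ((Finsupp.lapply j) ∘ₗ d.repr.toLinearMap)
        ((IsLocalRing.maximalIdeal R) • (⊤ : Submodule R (Y ⧸ L))) := ⟨w, hw, rfl⟩
    rw [Submodule.map_smul''] at h1
    have h2 : (IsLocalRing.maximalIdeal R)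
          • Submodule.map ((Finsupp.lapply j) ∘ₗ d.repr.toLinearMap)
            (⊤ : Submodule R (Y ⧸ L))
        ≤ (IsLocalRing.maximalIdeal R : Submodule R R) := by
      refine Submodule.smul_le.mpr fun r hr x _ => ?_
      rw [smul_eq_mul]
      exact Ideal.mul_mem_right x _ hr
    exact h2 h1
  have hg₁ne : g₁ (bX i₁) ∉ N := by
    intro hmem
    obtain ⟨l, hl, heq⟩ := hNmem.mp hmem
    have h0 : ρ (s (g₂ (bX i₁)) - l) = 0 := by
      rw [map_sub, ← hg₁app, ← heq, sub_self]
    have h1 := hρker _ h0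
    have h2 : g₂ (bX i₁) ∈ (IsLocalRing.maximalIdeal R) • (⊤ : Submodule R (Y ⧸ L)) := by
      have h3 : q (s (g₂ (bX i₁)) - l) = g₂ (bX i₁) := by
        rw [map_sub, hqs', (hqmem l).mp hl, sub_zero]
      rw [← h3]
      have h4 : q (s (g₂ (bX i₁)) - l) ∈ Submodule.map q
          ((IsLocalRing.maximalIdeal R) • (⊤ : Submodule R Y)) := ⟨_, h1, rfl⟩
      rw [Submodule.map_smul''] at h4
      exact Submodule.smul_mono le_rfl le_top h4
    have hgb : g₂ (bX i₁) = ∑ j, t' i₁ j • d j := Module.Basis.constr_basis bX R _ i₁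
    have h6 : ⇑(d.repr (g₂ (bX i₁))) = fun j => t' i₁ j := by
      rw [hgb]; exact d.repr_sum_self _
    have h5 := hcoord _ h2 j₁
    rw [h6] at h5
    exact hpsm h5
  -- assembling the homomorphism g
  let G : k ⊗[R] X →ₗ[k] k ⊗[R] Y := g₁.liftBaseChange k
  have hGapp : ∀ (c : k) (x : X), G (c ⊗ₜ[R] x) = c • g₁ x := fun c x => rfl
  have hmkadd : ∀ u v : k ⊗[R] Y, (Submodule.Quotient.mk (u + v) : (k ⊗[R] Y) ⧸ N)
      = Submodule.Quotient.mk u + Submodule.Quotient.mk v := fun u v => rfl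
  have hmksmul : ∀ (c : k ⊗[R] A) (u : k ⊗[R] Y),
      (Submodule.Quotient.mk (c • u) : (k ⊗[R] Y) ⧸ N) = c • Submodule.Quotient.mk u :=
    fun c u => rfl
  have hmkzero : (Submodule.Quotient.mk 0 : (k ⊗[R] Y) ⧸ N) = 0 := rfl
  have hNk : ∀ (c : k) {v : k ⊗[R] Y}, v ∈ N → c • v ∈ N := by
    intro c v hv
    rw [← ext_tmul_one_smul R k A Y]
    exact N.smul_mem _ hv
  have key : ∀ (c : k ⊗[R] A) (z : k ⊗[R] X),
      (Submodule.Quotient.mk (G (c • z)) : (k ⊗[R] Y) ⧸ N)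
        = c • (Submodule.Quotient.mk (G z) : (k ⊗[R] Y) ⧸ N) := by
    intro c z
    induction c using TensorProduct.induction_on with
    | zero => rw [zero_smul, zero_smul, map_zero, hmkzero]
    | tmul u a =>
        induction z using TensorProduct.induction_on with
        | zero => rw [smul_zero, map_zero, hmkzero, smul_zero]
        | tmul v x =>
            have h1 : (u ⊗ₜ[R] a) • (v ⊗ₜ[R] x) = (u * v) ⊗ₜ[R] (a • x) := by
              rw [ext_smul_def R k A X, smulBC_tmul, smul_tmul', smul_eq_mul]
            rw [h1, hGapp, hGapp]
            have h2 : (Submodule.Quotient.mk ((u * v) • g₁ (a • x)) : (k ⊗[R] Y) ⧸ N)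
                = Submodule.Quotient.mk ((u * v) • (smulBC R k A Y a (g₁ x))) := by
              rw [Submodule.Quotient.eq]
              convert hNk (u * v) (hg₁a a x) using 1
              exact (smul_sub (u * v) (g₁ (a • x)) (smulBC R k A Y a (g₁ x))).symm
            have h3 : (u ⊗ₜ[R] a) • (v • g₁ x) = (u * v) • (smulBC R k A Y a (g₁ x)) := by
              rw [ext_smul_def R k A Y, map_smul, smul_smul]
            rw [h2, ← h3, hmksmul]
        | add z₁ z₂ h₁ h₂ =>
            rw [smul_add, map_add, hmkadd, h₁, h₂, map_add, hmkadd, smul_add]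
    | add c₁ c₂ h₁ h₂ =>
        rw [add_smul, map_add, hmkadd, h₁, h₂, add_smul]
  let g : (k ⊗[R] X) →ₗ[k ⊗[R] A] ((k ⊗[R] Y) ⧸ N) :=
    { toFun := fun z => Submodule.Quotient.mk (G z)
      map_add' := fun z₁ z₂ => by
        show (Submodule.Quotient.mk (G (z₁ + z₂)) : (k ⊗[R] Y) ⧸ N) = _
        rw [map_add, hmkadd]
      map_smul' := fun c z => key c z }
  have hgne : g ≠ 0 := by
    intro h0
    have h1 : g ((1 : k) ⊗ₜ[R] bX i₁) = 0 := by rw [h0]; rfl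
    have h2 : g ((1 : k) ⊗ₜ[R] bX i₁)
        = Submodule.Quotient.mk (g₁ (bX i₁)) := by
      show (Submodule.Quotient.mk (G ((1 : k) ⊗ₜ[R] bX i₁)) : (k ⊗[R] Y) ⧸ N) = _
      rw [hGapp, one_smul]
    rw [h2] at h1
    exact hg₁ne ((Submodule.Quotient.mk_eq_zero N).mp h1)
  exact ⟨N, ⟨g, hgne⟩, L, hMset, hNset⟩
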